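/- For any two points z, w in the open unit disk, there exists a Carleson box Q_I such that z and w both lie in Q_I and (1/16)|Q_I| ≤ |1 - z·conj(w)|^2 ≤ 8|Q_I|, where |Q_I| denotes the normalized Lebesgue area of Q_I. -/

import Mathlib

open Complex Set MeasureTheory

/-- Normalized Lebesgue area on the plane (the unit disk has area 1). -/
noncomputable def nArea (S : Set ℂ) : ℝ := (volume S).toReal / Real.pi

/-- The Carleson box of the arc of the unit circle starting at angle `θ` with
normalized arc length `t`. -/
def carlesonBox (θ t : ℝ) : Set ℂ :=
  {z : ℂ | 1 - t ≤ ‖z‖ ∧ ‖z‖ < 1 ∧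
    ∃ s ∈ Set.Ico θ (θ + 2 * Real.pi * t), z = (‖z‖ : ℂ) * Complex.exp (s * Complex.I)}

open Real

private lemma exp_shift (s : ℝ) (k : ℤ) :
    Complex.exp (((s + 2*π*(k:ℝ)) : ℝ) * Complex.I) = Complex.exp ((s:ℝ) * Complex.I) := by
  rw [show (((s + 2*π*(k:ℝ)) : ℝ) : ℂ) * Complex.I
      = (s:ℝ)*Complex.I + (k:ℂ)*(2*(π:ℂ)*Complex.I) by push_cast; ring,
    Complex.exp_add, Complex.exp_int_mul_two_pi_mul_I, mul_one]

private lemma mem_carlesonBox_of (z : ℂ) (θ t : ℝ) (h1 : 1 - t ≤ ‖z‖) (h2 : ‖z‖ < 1)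
    (k : ℤ) (hs : z.arg + 2*π*(k:ℝ) ∈ Set.Ico θ (θ + 2*π*t)) :
    z ∈ carlesonBox θ t :=
  ⟨h1, h2, z.arg + 2*π*(k:ℝ), hs, by
    rw [exp_shift]
    exact (Complex.norm_mul_exp_arg_mul_I z).symm⟩

private lemma carlesonBox_eq_arg {t : ℝ} (ht0 : 0 < t) (ht1 : t < 1) :
    carlesonBox (-(π*t)) t =
      {z : ℂ | 1 - t ≤ ‖z‖ ∧ ‖z‖ < 1 ∧ z.arg ∈ Set.Ico (-(π*t)) (π*t)} := by
  have hπ := Real.pi_pos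
  ext z
  simp only [carlesonBox, Set.mem_setOf_eq]
  constructor
  · rintro ⟨h1, h2, s, ⟨hs1, hs2⟩, hzs⟩
    have hznorm : (0:ℝ) < ‖z‖ := by linarith
    have hs2' : s < π*t := by linarith
    have harg : z.arg = s := by
      conv_lhs => rw [hzs]
      rw [Complex.exp_mul_I]
      exact Complex.arg_mul_cos_add_sin_mul_I hznorm ⟨by nlinarith, by nlinarith⟩
    exact ⟨h1, h2, by rw [harg]; exact ⟨hs1, hs2'⟩⟩
  · rintro ⟨h1, h2, harg⟩
    exact ⟨h1, h2, z.arg, ⟨harg.1, by linarith [harg.2]⟩,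
      by exact (Complex.norm_mul_exp_arg_mul_I z).symm⟩

private lemma measurableSet_argSet (a b c e : ℝ) :
    MeasurableSet {z : ℂ | c ≤ ‖z‖ ∧ ‖z‖ < e ∧ z.arg ∈ Set.Ico a b} := by
  have : {z : ℂ | c ≤ ‖z‖ ∧ ‖z‖ < e ∧ z.arg ∈ Set.Ico a b}
      = ((fun z : ℂ => ‖z‖) ⁻¹' Set.Ici c) ∩ (((fun z : ℂ => ‖z‖) ⁻¹' Set.Iio e)
          ∩ (Complex.arg ⁻¹' Set.Ico a b)) := by
    ext u; simp [Set.mem_setOf_eq, and_assoc]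
  rw [this]
  exact (measurable_norm measurableSet_Ici).inter
    ((measurable_norm measurableSet_Iio).inter (Complex.measurable_arg measurableSet_Ico))

private lemma volume_carlesonBox_center {t : ℝ} (ht0 : 0 < t) (ht1 : t < 1) :
    (volume (carlesonBox (-(π*t)) t)).toReal = π * (t^2*(2-t)) := by
  have hπ := Real.pi_pos
  rw [carlesonBox_eq_arg ht0 ht1]
  set S := {z : ℂ | 1 - t ≤ ‖z‖ ∧ ‖z‖ < 1 ∧ z.arg ∈ Set.Ico (-(π*t)) (π*t)} with hS
  have hmeas : MeasurableSet S := measurableSet_argSet _ _ _ _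
  set R : Set (ℝ × ℝ) := Set.Ico (1-t) 1 ×ˢ Set.Ico (-(π*t)) (π*t) with hR
  have hmeasR : MeasurableSet R := measurableSet_Ico.prod measurableSet_Ico
  have hRsub : R ⊆ polarCoord.target := by
    rintro ⟨r, s⟩ ⟨hr, hs⟩
    simp only [Set.mem_Ico] at hr hs
    rw [polarCoord_target]
    exact ⟨by simp only [Set.mem_Ioi]; nlinarith [hr.1],
      by simp only [Set.mem_Ioo]; constructor <;> nlinarith [hs.1, hs.2]⟩
  have key : ∀ p ∈ polarCoord.target,
      p.1 • Set.indicator S (fun _ => (1:ℝ)) (Complex.polarCoord.symm p)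
        = Set.indicator R (fun q => q.1) p := by
    rintro ⟨r, s⟩ hp
    rw [polarCoord_target] at hp
    obtain ⟨hr, hs⟩ := hp
    simp only [Set.mem_Ioi] at hr
    simp only [Set.mem_Ioo] at hs
    have hsym : Complex.polarCoord.symm (r, s)
        = (r:ℂ) * (Real.cos s + Real.sin s * Complex.I) := by
      rw [Complex.polarCoord_symm_apply]
    have hnorm : ‖Complex.polarCoord.symm (r, s)‖ = r := by
      rw [Complex.norm_polarCoord_symm]; exact abs_of_pos hr
    have harg : (Complex.polarCoord.symm (r, s)).arg = s := by
      rw [hsym, Complex.ofReal_cos, Complex.ofReal_sin]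
      exact Complex.arg_mul_cos_add_sin_mul_I hr ⟨hs.1, hs.2.le⟩
    have hiff : (Complex.polarCoord.symm (r, s) ∈ S) ↔ ((r, s) ∈ R) := by
      rw [hS, hR]
      simp only [Set.mem_setOf_eq, Set.mem_prod, Set.mem_Ico, hnorm, harg]
      tauto
    by_cases hmem : (r, s) ∈ R
    · rw [Set.indicator_of_mem hmem, Set.indicator_of_mem (hiff.mpr hmem), smul_eq_mul, mul_one]
    · rw [Set.indicator_of_notMem hmem,
        Set.indicator_of_notMem (fun h => hmem (hiff.mp h)), smul_zero]
  have h1 : (volume S).toReal = ∫ z : ℂ, Set.indicator S (fun _ => (1:ℝ)) z := by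
    rw [integral_indicator hmeas, setIntegral_const, smul_eq_mul, mul_one, measureReal_def]
  rw [h1, ← Complex.integral_comp_polarCoord_symm (Set.indicator S (fun _ => (1:ℝ)))]
  rw [setIntegral_congr_fun polarCoord.open_target.measurableSet key]
  rw [setIntegral_indicator hmeasR, Set.inter_eq_self_of_subset_right hRsub]
  have hprod : ∫ p in R, (p.1 : ℝ)
      = (∫ x in Set.Ico (1-t) 1, x) * (∫ y in Set.Ico (-(π*t)) (π*t), (1:ℝ)) := by
    rw [hR, show (volume : Measure (ℝ × ℝ)) = (volume : Measure ℝ).prod volume from rfl,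
      ← setIntegral_prod_mul (fun x : ℝ => x) (fun _ : ℝ => (1:ℝ))]
    simp only [mul_one]
  have hA : ∫ x in Set.Ico (1-t) 1, (x:ℝ) = (1 - (1-t)^2)/2 := by
    rw [MeasureTheory.integral_Ico_eq_integral_Ioo, ← MeasureTheory.integral_Ioc_eq_integral_Ioo,
      ← intervalIntegral.integral_of_le (by linarith : (1:ℝ)-t ≤ 1), integral_id]
    ring
  have hB : ∫ y in Set.Ico (-(π*t)) (π*t), (1:ℝ) = 2*(π*t) := by
    rw [setIntegral_const, smul_eq_mul, mul_one, measureReal_def, Real.volume_Ico,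
      ENNReal.toReal_ofReal (by nlinarith : (0:ℝ) ≤ π*t - -(π*t))]
    ring
  rw [hprod, hA, hB]
  ring

private lemma carlesonBox_rot (θ₀ θ t : ℝ) :
    (fun z : ℂ => Complex.exp ((θ₀:ℝ) * Complex.I) * z) ⁻¹' carlesonBox θ t
      = carlesonBox (θ - θ₀) t := by
  ext z
  have hne : ‖Complex.exp ((θ₀:ℝ) * Complex.I) * z‖ = ‖z‖ := by
    rw [norm_mul, Complex.norm_exp_ofReal_mul_I, one_mul]
  have hexp : ∀ a b : ℝ, ∀ c u : ℂ,
      Complex.exp ((a:ℝ)*Complex.I) * u = c * Complex.exp ((b:ℝ)*Complex.I) →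
      u = c * Complex.exp (((b - a : ℝ))*Complex.I) := by
    intro a b c u h
    have key : (c * Complex.exp (((b - a : ℝ))*Complex.I)) * Complex.exp ((a:ℝ)*Complex.I)
        = c * Complex.exp ((b:ℝ)*Complex.I) := by
      rw [mul_assoc, ← Complex.exp_add]
      congr 2
      push_cast; ring
    apply mul_right_cancel₀ (Complex.exp_ne_zero ((a:ℝ)*Complex.I))
    rw [key, ← h]; ring
  simp only [carlesonBox, Set.mem_preimage, Set.mem_setOf_eq, hne]
  constructor
  · rintro ⟨h1, h2, s, ⟨hs1, hs2⟩, he⟩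
    exact ⟨h1, h2, s - θ₀, ⟨by linarith, by linarith⟩, hexp θ₀ s _ z he⟩
  · rintro ⟨h1, h2, s, ⟨hs1, hs2⟩, he⟩
    refine ⟨h1, h2, s + θ₀, ⟨by linarith, by linarith⟩, ?_⟩
    calc Complex.exp ((θ₀:ℝ) * Complex.I) * z
        = Complex.exp ((θ₀:ℝ) * Complex.I) * ((‖z‖:ℂ) * Complex.exp ((s:ℝ) * Complex.I)) := by
          rw [← he]
      _ = (‖z‖:ℂ) * Complex.exp (((s + θ₀ : ℝ)) * Complex.I) := by
          rw [← mul_assoc, mul_comm (Complex.exp _) ((‖z‖:ℂ)), mul_assoc, ← Complex.exp_add,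
            show (θ₀:ℂ)*Complex.I + (s:ℂ)*Complex.I = ((s+θ₀:ℝ):ℂ)*Complex.I by push_cast; ring]

private lemma measurableSet_carlesonBox {θ t : ℝ} (ht0 : 0 < t) (ht1 : t < 1) :
    MeasurableSet (carlesonBox θ t) := by
  have h1 : carlesonBox θ t
      = (fun z : ℂ => Complex.exp (((-(π*t) - θ : ℝ)) * Complex.I) * z) ⁻¹'
          carlesonBox (-(π*t)) t := by
    rw [carlesonBox_rot]
    congr 1
    ring
  rw [h1, carlesonBox_eq_arg ht0 ht1]
  exact (measurableSet_argSet _ _ _ _).preimage (by fun_prop)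

private lemma volume_carlesonBox {θ t : ℝ} (ht0 : 0 < t) (ht1 : t < 1) :
    (volume (carlesonBox θ t)).toReal = π * (t^2*(2-t)) := by
  have hrotmp : MeasurePreserving
      (fun z : ℂ => Complex.exp (((-(π*t) - θ : ℝ)) * Complex.I) * z) volume volume := by
    have h := (rotation (Circle.exp (-(π*t) - θ))).measurePreserving
    have hfun : ⇑(rotation (Circle.exp (-(π*t) - θ)))
        = fun z : ℂ => Complex.exp (((-(π*t) - θ : ℝ)) * Complex.I) * z := by
      funext u
      rw [rotation_apply, Circle.coe_exp]
    rwa [hfun] at h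
  have h1 : carlesonBox θ t
      = (fun z : ℂ => Complex.exp (((-(π*t) - θ : ℝ)) * Complex.I) * z) ⁻¹'
          carlesonBox (-(π*t)) t := by
    rw [carlesonBox_rot]
    congr 1
    ring
  have hmeas : MeasurableSet (carlesonBox (-(π*t)) t) := by
    rw [carlesonBox_eq_arg ht0 ht1]; exact measurableSet_argSet _ _ _ _
  rw [h1, hrotmp.measure_preimage hmeas.nullMeasurableSet]
  exact volume_carlesonBox_center ht0 ht1

private lemma carlesonBox_one : carlesonBox (-π) 1 = Metric.ball (0:ℂ) 1 := by
  have hπ := Real.pi_pos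
  ext z
  simp only [carlesonBox, Set.mem_setOf_eq, Metric.mem_ball, dist_zero_right]
  constructor
  · rintro ⟨-, h2, -⟩; exact h2
  · intro h2
    refine ⟨by linarith [norm_nonneg z], h2, ?_⟩
    by_cases hz0 : z = 0
    · exact ⟨-π, ⟨le_refl _, by nlinarith⟩, by simp [hz0]⟩
    · by_cases hπz : z.arg = π
      · refine ⟨-π, ⟨le_refl _, by nlinarith⟩, ?_⟩
        have h := Complex.norm_mul_exp_arg_mul_I z
        rw [hπz, Complex.exp_pi_mul_I] at h
        have hexp : Complex.exp (((-π : ℝ)) * Complex.I) = -1 := by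
          push_cast
          rw [neg_mul, Complex.exp_neg, Complex.exp_pi_mul_I]
          norm_num
        rw [hexp]
        exact h.symm
      · have harglt : z.arg < π := lt_of_le_of_ne (Complex.arg_le_pi z) hπz
        exact ⟨z.arg, ⟨by linarith [Complex.neg_pi_lt_arg z], by linarith⟩,
          by exact (Complex.norm_mul_exp_arg_mul_I z).symm⟩

private lemma nArea_carlesonBox {θ t : ℝ} (ht0 : 0 < t) (ht1 : t < 1) :
    nArea (carlesonBox θ t) = t^2*(2-t) := by
  rw [nArea, volume_carlesonBox ht0 ht1, mul_comm, mul_div_assoc,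
    div_self Real.pi_ne_zero, mul_one]

private lemma nArea_carlesonBox_one : nArea (carlesonBox (-π) 1) = 1 := by
  rw [nArea, carlesonBox_one, Complex.volume_ball]
  simp only [ENNReal.ofReal_one, one_pow, one_mul]
  rw [ENNReal.coe_toReal, NNReal.coe_real_pi]
  exact div_self Real.pi_ne_zero

private lemma norm_one_sub_mul_conj (z w : ℂ) :
    ‖1 - z * (starRingEnd ℂ) w‖^2
      = (1 - ‖z‖*‖w‖)^2 + 2*(‖z‖*‖w‖)*(1 - Real.cos (z.arg - w.arg)) := by
  have hz := Complex.norm_mul_exp_arg_mul_I z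
  have hw := Complex.norm_mul_exp_arg_mul_I w
  have h : z * (starRingEnd ℂ) w
      = ((‖z‖*‖w‖ : ℝ) : ℂ) * Complex.exp (((z.arg - w.arg : ℝ)) * Complex.I) := by
    conv_lhs => rw [← hz, ← hw]
    rw [map_mul, Complex.conj_ofReal, ← Complex.exp_conj, map_mul, Complex.conj_ofReal,
      Complex.conj_I, mul_mul_mul_comm, ← Complex.exp_add]
    congr 1
    · push_cast; ring
    · push_cast; ring
  rw [h, Complex.sq_norm, Complex.normSq_apply]
  simp only [Complex.sub_re, Complex.sub_im, Complex.one_re, Complex.one_im, Complex.mul_re,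
    Complex.mul_im, Complex.ofReal_re, Complex.ofReal_im, Complex.exp_ofReal_mul_I_re,
    Complex.exp_ofReal_mul_I_im]
  have hsc := Real.sin_sq_add_cos_sq (z.arg - w.arg)
  linear_combination (‖z‖^2*‖w‖^2) * hsc

private lemma angle_bound {r ρ φ d : ℝ} (hr0 : 0 ≤ r) (hρ0 : 0 ≤ ρ) (hrρ : r*ρ < 1)
    (hφ0 : 0 ≤ φ) (hφπ : φ ≤ π) (hd0 : 0 ≤ d)
    (hd : d^2 = (1 - r*ρ)^2 + 2*(r*ρ)*(1 - Real.cos φ)) :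
    φ < 2*π*(min 1 d) := by
  have hπ := Real.pi_pos
  have hrρ0 : 0 ≤ r*ρ := mul_nonneg hr0 hρ0
  have hsin : φ/π ≤ Real.sin (φ/2) := by
    have h := Real.mul_le_sin (x := φ/2) (by linarith) (by linarith)
    calc φ/π = 2/π * (φ/2) := by field_simp
      _ ≤ _ := h
  have hcos : 1 - Real.cos φ = 2 * Real.sin (φ/2)^2 := by
    have h1 := Real.cos_two_mul' (φ/2)
    have h3 : 2 * (φ/2) = φ := by ring
    rw [h3] at h1
    have h2 := Real.sin_sq_add_cos_sq (φ/2)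
    linarith
  have hφπ0 : 0 ≤ φ/π := div_nonneg hφ0 hπ.le
  have hkey : (1 - r*ρ)^2 + 4*(r*ρ)*(φ/π)^2 ≤ d^2 := by
    have hs2 : (φ/π)^2 ≤ Real.sin (φ/2)^2 := by nlinarith
    nlinarith
  by_cases hq : 1/4 ≤ r*ρ
  · have h1 : (φ/π)^2 ≤ d^2 := by nlinarith [sq_nonneg (1 - r*ρ)]
    have h2 : φ/π ≤ d := by nlinarith
    have hφd : φ ≤ π * d := by rw [div_le_iff₀ hπ] at h2; linarith
    rcases le_total d 1 with h | h
    · rw [min_eq_right h]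
      have hdpos : 0 < d := by nlinarith [sq_nonneg (φ/π)]
      nlinarith
    · rw [min_eq_left h]
      nlinarith
  · push_neg at hq
    have hd34 : 3/4 < d := by nlinarith [hcos, Real.sin_sq_add_cos_sq (φ/2), sq_nonneg (Real.sin (φ/2))]
    have hm : (3:ℝ)/4 < min 1 d := lt_min (by norm_num) hd34
    nlinarith

private lemma stmt_aux (z w : ℂ) (hz : ‖z‖ < 1) (hw : ‖w‖ < 1)
    (hba : w.arg ≤ z.arg) (hd1 : ‖1 - z * (starRingEnd ℂ) w‖ < 1) :
    ∃ θ, z ∈ carlesonBox θ ‖1 - z * (starRingEnd ℂ) w‖ ∧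
      w ∈ carlesonBox θ ‖1 - z * (starRingEnd ℂ) w‖ := by
  set d := ‖1 - z * (starRingEnd ℂ) w‖ with hdd
  have hπ := Real.pi_pos
  have hid := norm_one_sub_mul_conj z w
  rw [← hdd] at hid
  have hr0 := norm_nonneg z
  have hρ0 := norm_nonneg w
  have hd0 : 0 ≤ d := norm_nonneg _
  have hrρ : ‖z‖*‖w‖ < 1 := by nlinarith
  have hcos1 := Real.cos_le_one (z.arg - w.arg)
  have hcosm := Real.neg_one_le_cos (z.arg - w.arg)
  have hdlow : 1 - ‖z‖*‖w‖ ≤ d := by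
    have hsq : (1 - ‖z‖*‖w‖)^2 ≤ d^2 := by nlinarith [mul_nonneg (mul_nonneg hr0 hρ0) (sub_nonneg.mpr hcos1)]
    exact le_of_pow_le_pow_left₀ two_ne_zero hd0 hsq
  have hdpos : 0 < d := by nlinarith
  have hπd : 0 < π * d := mul_pos hπ hdpos
  have hz1 : 1 - d ≤ ‖z‖ := by nlinarith
  have hw1 : 1 - d ≤ ‖w‖ := by nlinarith
  have hαπ := Complex.arg_le_pi z
  have hβπ := Complex.neg_pi_lt_arg w
  have hαl := Complex.neg_pi_lt_arg z
  have hβu := Complex.arg_le_pi w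
  have hmin : min 1 d = d := min_eq_right hd1.le
  rcases le_or_gt (z.arg - w.arg) π with hsmall | hbig
  · have hb := angle_bound hr0 hρ0 hrρ (by linarith) hsmall hd0 hid
    rw [hmin] at hb
    refine ⟨w.arg,
      mem_carlesonBox_of z _ _ hz1 hz 0 ?_,
      mem_carlesonBox_of w _ _ hw1 hw 0 ?_⟩
    · rw [Set.mem_Ico]; push_cast; ring_nf; ring_nf at hb hπd
      constructor <;> linarith
    · rw [Set.mem_Ico]; push_cast; ring_nf; ring_nf at hb hπd
      constructor <;> linarith
  · have hcoseq : Real.cos (2*π - (z.arg - w.arg)) = Real.cos (z.arg - w.arg) :=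
      Real.cos_two_pi_sub _
    have hb := angle_bound (φ := 2*π - (z.arg - w.arg)) hr0 hρ0 hrρ
      (by linarith) (by linarith) hd0 (by rw [hcoseq]; exact hid)
    rw [hmin] at hb
    refine ⟨z.arg,
      mem_carlesonBox_of z _ _ hz1 hz 0 ?_,
      mem_carlesonBox_of w _ _ hw1 hw 1 ?_⟩
    · rw [Set.mem_Ico]; push_cast; ring_nf; ring_nf at hb hπd
      constructor <;> linarith
    · rw [Set.mem_Ico]; push_cast; ring_nf; ring_nf at hb hπd
      constructor <;> linarith

theorem stmt1 (z w : ℂ) (hz : ‖z‖ < 1) (hw : ‖w‖ < 1) :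
    ∃ θ t : ℝ, 0 < t ∧ t ≤ 1 ∧ z ∈ carlesonBox θ t ∧ w ∈ carlesonBox θ t ∧
      (1 / 16) * nArea (carlesonBox θ t) ≤ ‖1 - z * (starRingEnd ℂ) w‖ ^ 2 ∧
      ‖1 - z * (starRingEnd ℂ) w‖ ^ 2 ≤ 8 * nArea (carlesonBox θ t) := by
  have hπ := Real.pi_pos
  set d := ‖1 - z * (starRingEnd ℂ) w‖ with hdd
  have hid := norm_one_sub_mul_conj z w
  rw [← hdd] at hid
  have hr0 := norm_nonneg z
  have hρ0 := norm_nonneg w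
  have hd0 : 0 ≤ d := norm_nonneg _
  have hrρ : ‖z‖*‖w‖ < 1 := by nlinarith
  have hrρ0 : 0 ≤ ‖z‖*‖w‖ := mul_nonneg hr0 hρ0
  have hcos1 := Real.cos_le_one (z.arg - w.arg)
  have hcosm := Real.neg_one_le_cos (z.arg - w.arg)
  have hdlow : 1 - ‖z‖*‖w‖ ≤ d := by
    have hsq : (1 - ‖z‖*‖w‖)^2 ≤ d^2 := by nlinarith [mul_nonneg hrρ0 (sub_nonneg.mpr hcos1)]
    exact le_of_pow_le_pow_left₀ two_ne_zero hd0 hsq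
  have hdpos : 0 < d := by nlinarith
  have hd2 : d < 2 := by nlinarith
  rcases lt_or_ge d 1 with hd1 | hd1
  · have key : ∃ θ, z ∈ carlesonBox θ d ∧ w ∈ carlesonBox θ d := by
      rcases le_total w.arg z.arg with hba | hba
      · exact stmt_aux z w hz hw hba hd1
      · have hsym : ‖1 - w * (starRingEnd ℂ) z‖ = d := by
          rw [hdd]
          have hc : (1 : ℂ) - w * (starRingEnd ℂ) z
              = (starRingEnd ℂ) (1 - z * (starRingEnd ℂ) w) := by
            rw [map_sub, map_one, map_mul, Complex.conj_conj, mul_comm]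
          rw [hc, Complex.norm_conj]
        have hd1' : ‖1 - w * (starRingEnd ℂ) z‖ < 1 := by rw [hsym]; exact hd1
        obtain ⟨θ, h1, h2⟩ := stmt_aux w z hw hz hba hd1'
        rw [hsym] at h1 h2
        exact ⟨θ, h2, h1⟩
    obtain ⟨θ, hzb, hwb⟩ := key
    refine ⟨θ, d, hdpos, hd1.le, hzb, hwb, ?_, ?_⟩
    · rw [nArea_carlesonBox hdpos hd1]; nlinarith
    · rw [nArea_carlesonBox hdpos hd1]; nlinarith
  · refine ⟨-π, 1, one_pos, le_refl 1, ?_, ?_, ?_, ?_⟩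
    · rw [carlesonBox_one]; simpa using hz
    · rw [carlesonBox_one]; simpa using hw
    · rw [nArea_carlesonBox_one]; nlinarith
    · rw [nArea_carlesonBox_one]; nlinarith
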